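/- Abstract absorption lemma underlying the first inf-sup condition (3.29) of Lemma 3.2. Let X be a real normed space and Y a real inner product space which is the orthogonal direct sum of two subspaces Y₀ and Y₁ (every y ∈ Y decomposes uniquely as y = y₀ + y₁ with y₀ ∈ Y₀, y₁ ∈ Y₁ and ⟨y₀, y₁⟩ = 0). Let F : X × Y → ℝ be a bilinear form and M, c₀, c₁ > 0 constants such that: (i) |F(x,y)| ≤ M‖x‖‖y‖ for all x ∈ X, y ∈ Y; (ii) for every y₀ ∈ Y₀ there exists x₀ ∈ X with ‖x₀‖ ≤ c₀‖y₀‖, F(x₀, y₀) ≥ ‖y₀‖², and F(x₀, y₁) = 0 for all y₁ ∈ Y₁; (iii) for every y₁ ∈ Y₁ there exists x₁ ∈ X with ‖x₁‖ ≤ c₁‖y₁‖ and F(x₁, y₁) ≥ ‖y₁‖². Then there exists γ > 0, depending only on M, c₀, c₁, such that for every nonzero y ∈ Y, sup over nonzero x ∈ X of F(x,y)/‖x‖ is at least γ‖y‖. -/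

import Mathlib

open RealInnerProductSpace

/-- Abstract absorption lemma underlying the first inf-sup condition (3.29) of
Lemma 3.2: `Y` is the orthogonal direct sum of subspaces `Y₀` and `Y₁`, `F` is a
bounded bilinear form which is surjectively controlled on `Y₀` (with test
elements annihilating `Y₁`) and on `Y₁`; then an inf-sup bound holds on all of
`Y` with a constant `γ` depending only on `M, c₀, c₁`. -/
theorem absorption_inf_sup
    {X Y : Type*} [NormedAddCommGroup X] [NormedSpace ℝ X]
    [NormedAddCommGroup Y] [InnerProductSpace ℝ Y]
    (Y₀ Y₁ : Submodule ℝ Y)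
    (horth : ∀ y₀ ∈ Y₀, ∀ y₁ ∈ Y₁, ⟪y₀, y₁⟫ = 0)
    (hdecomp : ∀ y : Y, ∃! z : Y × Y, z.1 ∈ Y₀ ∧ z.2 ∈ Y₁ ∧ y = z.1 + z.2)
    (F : X →ₗ[ℝ] Y →ₗ[ℝ] ℝ)
    (M c₀ c₁ : ℝ) (hM : 0 < M) (hc₀ : 0 < c₀) (hc₁ : 0 < c₁)
    -- (i) continuity of the bilinear form
    (hbound : ∀ (x : X) (y : Y), |F x y| ≤ M * ‖x‖ * ‖y‖)
    -- (ii) control on Y₀ by test elements annihilating Y₁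
    (h₀ : ∀ y₀ ∈ Y₀, ∃ x₀ : X, ‖x₀‖ ≤ c₀ * ‖y₀‖ ∧ ‖y₀‖ ^ 2 ≤ F x₀ y₀ ∧
        ∀ y₁ ∈ Y₁, F x₀ y₁ = 0)
    -- (iii) control on Y₁
    (h₁ : ∀ y₁ ∈ Y₁, ∃ x₁ : X, ‖x₁‖ ≤ c₁ * ‖y₁‖ ∧ ‖y₁‖ ^ 2 ≤ F x₁ y₁) :
    ∃ γ > 0, ∀ y : Y, y ≠ 0 →
      γ * ‖y‖ ≤ ⨆ x : {x : X // x ≠ 0}, F x.1 y / ‖x.1‖ := by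
  set β : ℝ := 1 / (M ^ 2 * c₁ ^ 2) with hβdef
  have hβ : 0 < β := by positivity
  set m : ℝ := min (1 / 2) (β / 2) with hmdef
  have hm : 0 < m := by positivity
  set C : ℝ := c₀ + β * c₁ with hCdef
  have hC : 0 < C := by positivity
  refine ⟨m / C, by positivity, ?_⟩
  intro y hy
  obtain ⟨⟨y₀, y₁⟩, ⟨hy₀, hy₁, hsum⟩, -⟩ := hdecomp y
  simp only at hy₀ hy₁ hsum
  have hpyth : ‖y‖ ^ 2 = ‖y₀‖ ^ 2 + ‖y₁‖ ^ 2 := by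
    rw [hsum, norm_add_sq_real, horth y₀ hy₀ y₁ hy₁]; ring
  have hyn : (0:ℝ) < ‖y‖ := norm_pos_iff.mpr hy
  have h0le : ‖y₀‖ ≤ ‖y‖ := by nlinarith [norm_nonneg y₀, norm_nonneg y₁]
  have h1le : ‖y₁‖ ≤ ‖y‖ := by nlinarith [norm_nonneg y₀, norm_nonneg y₁]
  obtain ⟨x₀, hx₀n, hx₀F, hx₀ann⟩ := h₀ y₀ hy₀
  obtain ⟨x₁, hx₁n, hx₁F⟩ := h₁ y₁ hy₁
  set x : X := x₀ + β • x₁ with hxdef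
  -- the value of F on the combined test element
  have hFx : F x y = F x₀ y₀ + β * F x₁ y₀ + β * F x₁ y₁ := by
    have := hx₀ann y₁ hy₁
    simp [hxdef, hsum, map_add, map_smul, this]
  -- cross term estimate
  have hcross : |F x₁ y₀| ≤ M * (c₁ * ‖y₁‖) * ‖y₀‖ := by
    calc |F x₁ y₀| ≤ M * ‖x₁‖ * ‖y₀‖ := hbound x₁ y₀
      _ ≤ M * (c₁ * ‖y₁‖) * ‖y₀‖ := by gcongr
  have hcross' : -(M * (c₁ * ‖y₁‖) * ‖y₀‖) ≤ F x₁ y₀ := neg_le_of_abs_le hcross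
  -- lower bound for F x y
  have hβeq : β ^ 2 * M ^ 2 * c₁ ^ 2 = β := by
    field_simp [hβdef]
    rw [hβdef, one_div, mul_assoc, inv_mul_cancel₀ (by positivity)]
  have hkey : m * ‖y‖ ^ 2 ≤ F x y := by
    have hamgm : β * (M * (c₁ * ‖y₁‖) * ‖y₀‖) ≤
        ‖y₀‖ ^ 2 / 2 + β ^ 2 * M ^ 2 * c₁ ^ 2 * ‖y₁‖ ^ 2 / 2 := by
      nlinarith [sq_nonneg (‖y₀‖ - β * M * c₁ * ‖y₁‖)]
    rw [hβeq] at hamgm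
    have hm1 : m * ‖y₀‖ ^ 2 ≤ 1 / 2 * ‖y₀‖ ^ 2 :=
      mul_le_mul_of_nonneg_right (min_le_left _ _) (sq_nonneg _)
    have hm2 : m * ‖y₁‖ ^ 2 ≤ β / 2 * ‖y₁‖ ^ 2 :=
      mul_le_mul_of_nonneg_right (min_le_right _ _) (sq_nonneg _)
    have hcrossβ : -(β * (M * (c₁ * ‖y₁‖) * ‖y₀‖)) ≤ β * F x₁ y₀ := by
      have := mul_le_mul_of_nonneg_left hcross' hβ.le
      linarith [this]
    have hβF : β * ‖y₁‖ ^ 2 ≤ β * F x₁ y₁ :=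
      mul_le_mul_of_nonneg_left hx₁F hβ.le
    rw [hFx, hpyth, mul_add]
    linarith
  have hFpos : 0 < F x y := lt_of_lt_of_le (by positivity) hkey
  have hxne : x ≠ 0 := by
    intro h
    rw [h] at hFpos
    simp at hFpos
  have hxn : ‖x‖ ≤ C * ‖y‖ := by
    calc ‖x‖ ≤ ‖x₀‖ + ‖β • x₁‖ := norm_add_le _ _
      _ = ‖x₀‖ + β * ‖x₁‖ := by rw [norm_smul, Real.norm_eq_abs, abs_of_pos hβ]
      _ ≤ c₀ * ‖y₀‖ + β * (c₁ * ‖y₁‖) := by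
          have := mul_le_mul_of_nonneg_left hx₁n hβ.le
          linarith
      _ ≤ c₀ * ‖y‖ + β * (c₁ * ‖y‖) := by gcongr
      _ = C * ‖y‖ := by ring
  have hxpos : (0:ℝ) < ‖x‖ := norm_pos_iff.mpr hxne
  -- boundedness of the sup
  have hbdd : BddAbove (Set.range fun x : {x : X // x ≠ 0} => F x.1 y / ‖x.1‖) := by
    refine ⟨M * ‖y‖, ?_⟩
    rintro r ⟨⟨z, hz⟩, rfl⟩
    have hzpos : (0:ℝ) < ‖z‖ := norm_pos_iff.mpr hz
    have h1 : F z y ≤ M * ‖z‖ * ‖y‖ := le_of_abs_le (hbound z y)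
    rw [div_le_iff₀ hzpos]
    calc F z y ≤ M * ‖z‖ * ‖y‖ := h1
      _ = M * ‖y‖ * ‖z‖ := by ring
  refine le_trans ?_ (le_ciSup hbdd ⟨x, hxne⟩)
  rw [le_div_iff₀ hxpos]
  have hstep : m / C * ‖y‖ * ‖x‖ ≤ m / C * ‖y‖ * (C * ‖y‖) :=
    mul_le_mul_of_nonneg_left hxn (by positivity)
  have heq : m / C * ‖y‖ * (C * ‖y‖) = m * ‖y‖ ^ 2 := by
    field_simp
  linarith [hkey]
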